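/- Let d ≥ 1. For every matrix ρ on ℂ^d ⊗ ℂ^d, the controlled-order channel satisfies S(ρ) := Σ_{(i_0,…,i_{d−1})∈(Fin d)^d} S_{i_0,…,i_{d−1}} ρ S_{i_0,…,i_{d−1}}† = P_0 ρ P_0 + Σ_{j∈Fin d} Σ_{l∈Fin d, l≠j} ρ((l,j),(l,j)) · |j⟩⟨j| ⊗ |j⟩⟨j|, where P_0 := Σ_{j∈Fin d} |j⟩⟨j| ⊗ |j⟩⟨j|. -/

import Mathlib

open Matrix Kronecker BigOperators Complex

noncomputable def Emat (d : ℕ) (j i : Fin d) : Matrix (Fin d) (Fin d) ℂ :=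
  Matrix.single j i 1

lemma emat_mul {d : ℕ} [Fintype (Fin d)] (a b c e : Fin d) :
    Emat d a b * Emat d c e = if b = c then Emat d a e else 0 := by
  split_ifs with h
  · subst h; simp [Emat, Matrix.single_mul_single_same]
  · exact Matrix.single_mul_single_of_ne (c := (1 : ℂ)) a b c h 1

noncomputable def P0 (d : ℕ) : Matrix (Fin d × Fin d) (Fin d × Fin d) ℂ :=
  ∑ j : Fin d, Emat d j j ⊗ₖ Emat d j j

noncomputable def Sop (d : ℕ) [NeZero d] (idx : Fin d → Fin d) :
    Matrix (Fin d × Fin d) (Fin d × Fin d) ℂ :=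
  ∑ j : Fin d,
    (((List.finRange d).map (fun k => Emat d (j + k) (idx (j + k)))).prod) ⊗ₖ Emat d j j

open Fin.CommRing

-- cast facts
lemma natCast_dsub {d : ℕ} [NeZero d] : (((d - 1 : ℕ)) : Fin d) = -1 := by
  have hd : 1 ≤ d := Nat.one_le_iff_ne_zero.mpr (NeZero.ne d)
  have : ((d : ℕ) : Fin d) = 0 := by simp
  rw [Nat.cast_sub hd]
  simp [this]

lemma prod_range {d : ℕ} [NeZero d] (idx : Fin d → Fin d) (j : Fin d) :
    ∀ s : ℕ, 1 ≤ s →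
    ((List.range s).map (fun k : ℕ => Emat d (j + (k : Fin d)) (idx (j + (k : Fin d))))).prod
    = if (∀ k : ℕ, k < s - 1 → idx (j + (k : Fin d)) = j + (k : Fin d) + 1)
      then Emat d j (idx (j + ((s - 1 : ℕ) : Fin d))) else 0 := by
  intro s hs
  induction s with
  | zero => omega
  | succ s ih =>
    rcases Nat.eq_or_lt_of_le hs with h1 | h1
    · -- s + 1 = 1, i.e. s = 0
      have : s = 0 := by omega
      subst this
      simp [List.range_succ]
    · have hs1 : 1 ≤ s := by omega
      have key := ih hs1
      rw [List.range_succ, List.map_append, List.prod_append, key]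
      have hsub : ((s - 1 : ℕ) : Fin d) + 1 = ((s : ℕ) : Fin d) := by
        have h2 : s - 1 + 1 = s := Nat.sub_add_cancel hs1
        calc ((s - 1 : ℕ) : Fin d) + 1 = ((s - 1 + 1 : ℕ) : Fin d) := by push_cast; ring
          _ = ((s : ℕ) : Fin d) := by rw [h2]
      by_cases hc : ∀ k : ℕ, k < s - 1 → idx (j + (k : Fin d)) = j + (k : Fin d) + 1
      · rw [if_pos hc]
        simp only [List.map_cons, List.map_nil, List.prod_cons, List.prod_nil, mul_one]
        rw [emat_mul]
        by_cases hlast : idx (j + ((s - 1 : ℕ) : Fin d)) = j + ((s - 1 : ℕ) : Fin d) + 1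
        · have hl' : idx (j + ((s - 1 : ℕ) : Fin d)) = j + ((s : ℕ) : Fin d) := by
            rw [hlast, add_assoc, hsub]
          rw [if_pos hl']
          have hcond : ∀ k : ℕ, k < s + 1 - 1 → idx (j + (k : Fin d)) = j + (k : Fin d) + 1 := by
            intro k hk
            rcases Nat.lt_or_ge k (s - 1) with h | h
            · exact hc k h
            · have : k = s - 1 := by omega
              subst this; exact hlast
          rw [if_pos hcond]
          norm_num
        · have hl' : idx (j + ((s - 1 : ℕ) : Fin d)) ≠ j + ((s : ℕ) : Fin d) :=
            fun h => hlast (by rw [h, add_assoc, hsub])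
          have hnc : ¬(∀ k : ℕ, k < s + 1 - 1 → idx (j + (k : Fin d)) = j + (k : Fin d) + 1) :=
            fun hcond => hlast (hcond (s - 1) (by omega))
          rw [if_neg hl', if_neg hnc]
      · rw [if_neg hc, zero_mul, if_neg]
        intro hcond
        exact hc fun k hk => hcond k (by omega)

section main
variable {d : ℕ} [NeZero d]

/-- The `d ≥ 1` condition -/
lemma one_le_d : 1 ≤ d := Nat.one_le_iff_ne_zero.mpr (NeZero.ne d)

lemma natCast_inj_lt {a b : ℕ} (ha : a < d) (hb : b < d)
    (h : (a : Fin d) = (b : Fin d)) : a = b := by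
  have := congrArg Fin.val h
  simpa [Fin.val_natCast, Nat.mod_eq_of_lt ha, Nat.mod_eq_of_lt hb] using this

lemma cond_iff (idx : Fin d → Fin d) (j : Fin d) :
    (∀ k : ℕ, k < d - 1 → idx (j + (k : Fin d)) = j + (k : Fin d) + 1)
      ↔ (∀ m : Fin d, m ≠ j - 1 → idx m = m + 1) := by
  have hd : 1 ≤ d := one_le_d
  constructor
  · intro h m hm
    set k : ℕ := (m - j).val with hkdef
    have hk : ((k : ℕ) : Fin d) = m - j := Fin.cast_val_eq_self _
    have hjk : j + (k : Fin d) = m := by rw [hk]; ring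
    have hklt : k < d := (m - j).isLt
    have hkne : k ≠ d - 1 := by
      intro hkd
      apply hm
      have : ((k : ℕ) : Fin d) = -1 := by rw [hkd, natCast_dsub]
      rw [hk] at this
      rw [show m = j + (m - j) by ring, this]
      ring
    have := h k (by omega)
    rwa [hjk] at this
  · intro h k hk
    apply h
    intro hcontra
    have : ((k : ℕ) : Fin d) = ((d - 1 : ℕ) : Fin d) := by
      rw [natCast_dsub]
      have := hcontra
      rw [sub_eq_add_neg] at this
      exact add_left_cancel this
    have := natCast_inj_lt (by omega) (by omega) this
    omega

lemma sop_eq (idx : Fin d → Fin d) :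
    Sop d idx = ∑ j : Fin d,
      (if (∀ m : Fin d, m ≠ j - 1 → idx m = m + 1)
        then Emat d j (idx (j - 1)) else 0) ⊗ₖ Emat d j j := by
  unfold Sop
  apply Finset.sum_congr rfl
  intro j _
  congr 1
  have hcast : ∀ (a : ℕ) (h : a < d), (⟨a, h⟩ : Fin d) = (a : Fin d) := by
    intro a h
    ext
    simp [Fin.val_natCast, Nat.mod_eq_of_lt h]
  have hmap : (List.finRange d).map (fun k => Emat d (j + k) (idx (j + k)))
      = (List.range d).map (fun k : ℕ => Emat d (j + (k : Fin d)) (idx (j + (k : Fin d)))) := by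
    apply List.ext_getElem <;> simp [hcast]
  rw [hmap, prod_range idx j d one_le_d]
  have hm1 : j + ((d - 1 : ℕ) : Fin d) = j - 1 := by rw [natCast_dsub]; ring
  rw [if_congr (cond_iff idx j) (by rw [hm1]) rfl]

lemma conj_lemma (a b c e : Fin d) (ρ : Matrix (Fin d × Fin d) (Fin d × Fin d) ℂ) :
    (Emat d a b ⊗ₖ Emat d c e) * ρ * (Emat d a b ⊗ₖ Emat d c e)ᴴ
      = ρ (b, e) (b, e) • (Emat d a a ⊗ₖ Emat d c c) := by
  ext ⟨p, q⟩ ⟨p', q'⟩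
  simp only [Matrix.mul_apply, Matrix.conjTranspose_apply, Emat, Matrix.single,
    Matrix.kroneckerMap_apply, Matrix.of_apply, Fintype.sum_prod_type, ite_and, mul_ite, ite_mul,
    mul_zero, zero_mul, mul_one, one_mul, Finset.sum_ite_eq, Finset.sum_ite_eq',
    Finset.mem_univ, if_true, Matrix.smul_apply, smul_eq_mul,
    Finset.sum_const_zero, Matrix.zero_apply]
  split_ifs <;> simp_all [apply_ite (starRingEnd ℂ), mul_ite, Finset.sum_ite_eq, Finset.sum_ite_eq']

lemma sop_sigma : Sop d (fun m : Fin d => m + 1) = P0 d := by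
  rw [sop_eq]
  unfold P0
  refine Finset.sum_congr rfl fun j _ => ?_
  rw [if_pos (fun m _ => rfl)]
  congr 1
  rw [sub_add_cancel]

lemma sop_single (m₀ l₀ : Fin d) (hl : l₀ ≠ m₀ + 1) :
    Sop d (Function.update (fun m : Fin d => m + 1) m₀ l₀)
      = Emat d (m₀ + 1) l₀ ⊗ₖ Emat d (m₀ + 1) (m₀ + 1) := by
  set idx := Function.update (fun m : Fin d => m + 1) m₀ l₀ with hidx
  rw [sop_eq]
  rw [Finset.sum_eq_single_of_mem (m₀ + 1) (Finset.mem_univ _)]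
  · rw [if_pos, add_sub_cancel_right, hidx, Function.update_self]
    intro m hm
    rw [add_sub_cancel_right] at hm
    rw [hidx, Function.update_of_ne hm]
  · intro j _ hj
    rw [if_neg, Matrix.zero_kronecker]
    intro hC
    have hm : m₀ ≠ j - 1 := by
      intro h
      exact hj (by rw [h, sub_add_cancel])
    have := hC m₀ hm
    rw [hidx, Function.update_self] at this
    exact hl this

lemma sop_single' (m₀ l₀ : Fin d) (hl : l₀ ≠ m₀ + 1) :
    Sop d (Function.update (fun m : Fin d => m + 1) m₀ l₀)
      = Emat d (m₀ + 1) l₀ ⊗ₖ Emat d (m₀ + 1) (m₀ + 1) := sop_single m₀ l₀ hl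

lemma sop_zero (idx : Fin d → Fin d) (m₁ m₂ : Fin d) (h12 : m₁ ≠ m₂)
    (h1 : idx m₁ ≠ m₁ + 1) (h2 : idx m₂ ≠ m₂ + 1) : Sop d idx = 0 := by
  rw [sop_eq]
  apply Finset.sum_eq_zero
  intro j _
  rw [if_neg, Matrix.zero_kronecker]
  intro hC
  by_cases hm : m₁ = j - 1
  · have hm2 : m₂ ≠ j - 1 := fun h => h12 (hm.trans h.symm)
    exact h2 (hC m₂ hm2)
  · exact h1 (hC m₁ hm)

omit [NeZero d] in
lemma emat_herm (j : Fin d) : (Emat d j j)ᴴ = Emat d j j := by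
  ext p q
  simp [Emat, Matrix.conjTranspose_apply, Matrix.single, apply_ite (starRingEnd ℂ),
    and_comm]

omit [NeZero d] in
lemma P0_herm : (P0 d)ᴴ = P0 d := by
  ext ⟨p, q⟩ ⟨p', q'⟩
  simp only [P0, Matrix.conjTranspose_apply, Matrix.sum_apply, Matrix.kroneckerMap_apply,
    map_sum, Emat, Matrix.single, Matrix.of_apply, ite_and, mul_ite, ite_mul, mul_one,
    one_mul, mul_zero, zero_mul]
  rw [star_sum]
  refine Finset.sum_congr rfl fun j _ => ?_
  split_ifs <;> simp_all

lemma key_lemma (ρ : Matrix (Fin d × Fin d) (Fin d × Fin d) ℂ) (idx : Fin d → Fin d) :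
    Sop d idx * ρ * (Sop d idx)ᴴ =
      (if idx = (fun m : Fin d => m + 1) then P0 d * ρ * P0 d else 0)
      + ∑ j : Fin d, ∑ l ∈ Finset.univ.filter (fun l : Fin d => l ≠ j),
          (if idx = Function.update (fun m : Fin d => m + 1) (j - 1) l
            then ρ (l, j) (l, j) • (Emat d j j ⊗ₖ Emat d j j) else 0) := by
  by_cases h0 : idx = fun m : Fin d => m + 1
  · rw [h0, sop_sigma, if_pos rfl, P0_herm]
    have hz : (∑ j : Fin d, ∑ l ∈ Finset.univ.filter (fun l : Fin d => l ≠ j),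
        (if (fun m : Fin d => m + 1) = Function.update (fun m : Fin d => m + 1) (j - 1) l
          then ρ (l, j) (l, j) • (Emat d j j ⊗ₖ Emat d j j) else 0)) = 0 := by
      apply Finset.sum_eq_zero; intro j _
      apply Finset.sum_eq_zero; intro l hl
      rw [Finset.mem_filter] at hl
      rw [if_neg]
      intro he
      have := congrFun he (j - 1)
      rw [Function.update_self, sub_add_cancel] at this
      exact hl.2 this.symm
    rw [hz, add_zero]
  · by_cases h1 : ∃ m₀ : Fin d, (∀ m : Fin d, m ≠ m₀ → idx m = m + 1) ∧ idx m₀ ≠ m₀ + 1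
    · obtain ⟨m₀, hagree, hdis⟩ := h1
      have hupd : idx = Function.update (fun m : Fin d => m + 1) m₀ (idx m₀) := by
        funext m
        by_cases hm : m = m₀
        · subst hm; rw [Function.update_self]
        · rw [Function.update_of_ne hm]; exact hagree m hm
      have hLHS : Sop d idx * ρ * (Sop d idx)ᴴ
          = ρ (idx m₀, m₀ + 1) (idx m₀, m₀ + 1) • (Emat d (m₀+1) (m₀+1) ⊗ₖ Emat d (m₀+1) (m₀+1)) := by
        rw [hupd, sop_single m₀ (idx m₀) hdis, conj_lemma, Function.update_self]
      rw [hLHS, if_neg h0, zero_add]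
      rw [Finset.sum_eq_single_of_mem (m₀ + 1) (Finset.mem_univ _)]
      · rw [Finset.sum_eq_single_of_mem (idx m₀)
            (by rw [Finset.mem_filter]; exact ⟨Finset.mem_univ _, hdis⟩)]
        · rw [if_pos (by rw [add_sub_cancel_right]; exact hupd)]
        · intro l hl hlne
          rw [if_neg]
          intro he
          rw [add_sub_cancel_right] at he
          have := congrFun he m₀
          rw [Function.update_self] at this
          exact hlne this.symm
      · intro j _ hj
        apply Finset.sum_eq_zero
        intro l hl
        rw [if_neg]
        intro he
        have hmj : m₀ = j - 1 := by
          by_contra hmj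
          have := congrFun he m₀
          rw [Function.update_of_ne hmj] at this
          exact hdis this
        exact hj (by rw [hmj, sub_add_cancel])
    · -- at least two disagreements
      have hex : ∃ m₁ : Fin d, idx m₁ ≠ m₁ + 1 := by
        by_contra h
        push_neg at h
        exact h0 (funext h)
      obtain ⟨m₁, hm₁⟩ := hex
      have hex2 : ∃ m₂ : Fin d, m₂ ≠ m₁ ∧ idx m₂ ≠ m₂ + 1 := by
        by_contra h
        push_neg at h
        exact h1 ⟨m₁, fun m hm => h m hm, hm₁⟩
      obtain ⟨m₂, hne, hm₂⟩ := hex2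
      rw [sop_zero idx m₂ m₁ hne hm₂ hm₁]
      rw [if_neg h0, zero_add]
      have hz : (∑ j : Fin d, ∑ l ∈ Finset.univ.filter (fun l : Fin d => l ≠ j),
          (if idx = Function.update (fun m : Fin d => m + 1) (j - 1) l
            then ρ (l, j) (l, j) • (Emat d j j ⊗ₖ Emat d j j) else 0)) = 0 := by
        apply Finset.sum_eq_zero; intro j _
        apply Finset.sum_eq_zero; intro l _
        rw [if_neg]
        intro he
        have haux : ∀ m : Fin d, idx m ≠ m + 1 → m = j - 1 := by
          intro m hm
          by_contra hmj
          have := congrFun he m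
          rw [Function.update_of_ne hmj] at this
          exact hm this
        exact hne ((haux m₂ hm₂).trans (haux m₁ hm₁).symm)
      rw [hz]
      simp

end main

/-- explicit form of the controlled-order channel. -/
theorem stmt_2 (d : ℕ) [NeZero d] (ρ : Matrix (Fin d × Fin d) (Fin d × Fin d) ℂ) :
    ∑ idx : Fin d → Fin d, Sop d idx * ρ * (Sop d idx)ᴴ =
      P0 d * ρ * P0 d +
        ∑ j : Fin d, ∑ l ∈ Finset.univ.filter (fun l : Fin d => l ≠ j),
          ρ (l, j) (l, j) • (Emat d j j ⊗ₖ Emat d j j) := by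
  rw [Finset.sum_congr rfl (fun idx _ => key_lemma ρ idx), Finset.sum_add_distrib]
  congr 1
  · rw [Finset.sum_ite_eq' Finset.univ (fun m : Fin d => m + 1)
      (fun _ => P0 d * ρ * P0 d), if_pos (Finset.mem_univ _)]
  · rw [Finset.sum_comm]
    refine Finset.sum_congr rfl fun j _ => ?_
    rw [Finset.sum_comm]
    refine Finset.sum_congr rfl fun l _ => ?_
    rw [Finset.sum_ite_eq' Finset.univ (Function.update (fun m : Fin d => m + 1) (j - 1) l)
      (fun _ => ρ (l, j) (l, j) • (Emat d j j ⊗ₖ Emat d j j)), if_pos (Finset.mem_univ _)]
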